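/- Let B₁ be an r×(n−r) complex matrix with r < n, and let B be the n×n block matrix [[0,0],[B₁, I_r]]. Then every set of r distinct columns of B is linearly independent if and only if all minors of B₁ (of every size k ≤ min{n−r, r}) are nonzero. -/

import Mathlib

open Matrix

set_option maxHeartbeats 1000000 in
theorem stmt7 (n r : ℕ) (hr : r < n) (B₁ : Matrix (Fin r) (Fin (n - r)) ℂ) :
    (∀ s : Finset (Fin (n - r) ⊕ Fin r), s.card = r →
      LinearIndependent ℂ (fun j : s =>
        (Matrix.fromBlocks (0 : Matrix (Fin (n - r)) (Fin (n - r)) ℂ) 0 B₁ 1).transpose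
          (j : Fin (n - r) ⊕ Fin r))) ↔
    (∀ (k : ℕ) (f : Fin k → Fin r) (g : Fin k → Fin (n - r)),
      Function.Injective f → Function.Injective g → (B₁.submatrix f g).det ≠ 0) := by
  classical
  set B : Matrix (Fin (n - r) ⊕ Fin r) (Fin (n - r) ⊕ Fin r) ℂ :=
    Matrix.fromBlocks 0 0 B₁ 1 with hB
  have hBl : ∀ (b : Fin (n - r)) (y : Fin (n - r) ⊕ Fin r), B (Sum.inl b) y = 0 := by
    rintro b (a | q) <;> simp [hB]
  have hB1 : ∀ (p : Fin r) (a : Fin (n - r)), B (Sum.inr p) (Sum.inl a) = B₁ p a := by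
    intro p a; simp [hB]
  have hB2 : ∀ (p q : Fin r), B (Sum.inr p) (Sum.inr q) = if p = q then 1 else 0 := by
    intro p q; simp [hB, Matrix.one_apply]
  have hdisj : ∀ (u : Finset (Fin (n - r))) (t : Finset (Fin r)),
      Disjoint (u.map ⟨Sum.inl, Sum.inl_injective⟩) (t.map ⟨Sum.inr, Sum.inr_injective⟩) := by
    intro u t
    rw [Finset.disjoint_left]
    rintro x hx hx'
    simp only [Finset.mem_map, Function.Embedding.coeFn_mk] at hx hx'
    obtain ⟨a, -, rfl⟩ := hx
    obtain ⟨b, -, h⟩ := hx'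
    cases h
  constructor
  · -- LI for all r-subsets → all minors nonzero
    intro H k f g hf hg hdet
    have hkr : k ≤ r := by
      simpa using Fintype.card_le_of_injective f hf
    obtain ⟨c, hc0, hc⟩ := (Matrix.exists_mulVec_eq_zero_iff).2 hdet
    set T : Finset (Fin r) := (Finset.univ.image f)ᶜ with hT
    set s : Finset (Fin (n - r) ⊕ Fin r) :=
      (Finset.univ.image g).map ⟨Sum.inl, Sum.inl_injective⟩ ∪
        T.map ⟨Sum.inr, Sum.inr_injective⟩ with hsdef
    have hTcard : T.card = r - k := by
      rw [hT, Finset.card_compl, Finset.card_image_of_injective _ hf]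
      simp
    have hscard : s.card = r := by
      rw [hsdef, Finset.card_union_of_disjoint (hdisj _ _), Finset.card_map, Finset.card_map,
        Finset.card_image_of_injective _ hg, Finset.card_univ, hTcard]
      simp only [Fintype.card_fin]
      omega
    have hLI := H s hscard
    rw [Fintype.linearIndependent_iff] at hLI
    set S : Fin r → ℂ := fun p => ∑ j, B₁ p (g j) * c j with hS
    set D : (Fin (n - r) ⊕ Fin r) → ℂ :=
      Sum.elim (fun a => ∑ j, if g j = a then c j else 0)
        (fun q => if q ∈ T then -(S q) else 0) with hD
    have hsum : ∑ j : s, D j • B.transpose (j : Fin (n - r) ⊕ Fin r) = 0 := by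
      funext x
      rw [Finset.sum_apply]
      have heach : ∀ j : s, (D (j : Fin (n - r) ⊕ Fin r) •
          B.transpose (j : Fin (n - r) ⊕ Fin r)) x
          = D (j : Fin (n - r) ⊕ Fin r) * B x (j : Fin (n - r) ⊕ Fin r) := by
        intro j; simp [Matrix.transpose_apply]
      rw [Finset.sum_congr rfl (fun j _ => heach j)]
      have hx0 : (0 : (Fin (n - r) ⊕ Fin r) → ℂ) x = 0 := rfl
      rw [hx0, Finset.sum_coe_sort s (f := fun y => D y * B x y)]
      rw [hsdef, Finset.sum_union (hdisj _ _), Finset.sum_map, Finset.sum_map]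
      cases x with
      | inl b => simp [hBl]
      | inr p =>
        simp only [Function.Embedding.coeFn_mk, hB1, hB2, hD, Sum.elim_inl, Sum.elim_inr]
        have e1 : ∑ a ∈ Finset.univ.image g,
            (∑ j, if g j = a then c j else 0) * B₁ p a = S p := by
          rw [Finset.sum_image (fun x _ y _ h => hg h), hS]
          refine Finset.sum_congr rfl (fun j _ => ?_)
          have : (∑ j', if g j' = g j then c j' else 0) = c j := by
            simp only [hg.eq_iff]
            exact Fintype.sum_ite_eq' j c
          rw [this, mul_comm]
        rw [e1]
        have e2 : ∑ q ∈ T, (if q ∈ T then -(S q) else 0) * (if p = q then 1 else 0)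
            = if p ∈ T then -(S p) else 0 := by
          rw [Finset.sum_congr rfl (fun q hq => by rw [if_pos hq])]
          simp only [mul_ite, mul_one, mul_zero]
          exact Finset.sum_ite_eq T p (fun q => -(S q))
        rw [e2]
        by_cases hp : p ∈ T
        · simp [hp]
        · rw [if_neg hp]
          have hp' : p ∈ Finset.univ.image f := by
            rw [hT, Finset.mem_compl, not_not] at hp; exact hp
          obtain ⟨i, -, rfl⟩ := Finset.mem_image.1 hp'
          have := congrFun hc i
          simpa [hS, Matrix.mulVec, dotProduct, Matrix.submatrix_apply] using this
    obtain ⟨j₀, hj₀⟩ := Function.ne_iff.1 hc0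
    have hmem : (Sum.inl (g j₀) : Fin (n - r) ⊕ Fin r) ∈ s := by
      rw [hsdef]
      apply Finset.mem_union_left
      simp only [Finset.mem_map, Function.Embedding.coeFn_mk]
      exact ⟨g j₀, by simp, rfl⟩
    have hzero := hLI (fun j : s => D j) hsum ⟨_, hmem⟩
    simp only [hD, Sum.elim_inl] at hzero
    have : (∑ j, if g j = g j₀ then c j else 0) = c j₀ := by
      simp only [hg.eq_iff]
      exact Fintype.sum_ite_eq' j₀ c
    rw [this] at hzero
    exact hj₀ hzero
  · -- all minors nonzero → LI
    intro H s hs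
    rw [Fintype.linearIndependent_iff]
    intro c hc
    set sl : Finset (Fin (n - r)) := Finset.univ.filter (fun a => Sum.inl a ∈ s) with hsl
    set sr : Finset (Fin r) := Finset.univ.filter (fun q => Sum.inr q ∈ s) with hsr
    have hsplit : s = sl.map ⟨Sum.inl, Sum.inl_injective⟩ ∪ sr.map ⟨Sum.inr, Sum.inr_injective⟩ := by
      ext x
      cases x <;> simp [hsl, hsr]
    have hmemsl : ∀ a, a ∈ sl ↔ Sum.inl a ∈ s := by intro a; simp [hsl]
    have hmemsr : ∀ q, q ∈ sr ↔ Sum.inr q ∈ s := by intro q; simp [hsr]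
    have hcards : sl.card + sr.card = r := by
      have h1 : s.card = sl.card + sr.card := by
        rw [hsplit, Finset.card_union_of_disjoint (hdisj _ _), Finset.card_map, Finset.card_map]
      omega
    have hsrle : sr.card ≤ r := by simpa using Finset.card_le_univ sr
    have hcast : sl.card = srᶜ.card := by
      rw [Finset.card_compl]
      simp only [Fintype.card_fin]
      omega
    clear_value sl sr
    obtain ⟨k, hk⟩ : ∃ k, k = sl.card := ⟨_, rfl⟩
    have e₁ : Fin k ≃ {a // a ∈ sl} := (finCongr hk).trans sl.equivFin.symm
    have e₂ : Fin k ≃ {q // q ∈ srᶜ} := (finCongr (hk.trans hcast)).trans srᶜ.equivFin.symm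
    obtain ⟨g, hgdef⟩ : ∃ g : Fin k → Fin (n - r), g = fun i => (e₁ i : Fin (n - r)) := ⟨_, rfl⟩
    obtain ⟨f, hfdef⟩ : ∃ f : Fin k → Fin r, f = fun i => (e₂ i : Fin r) := ⟨_, rfl⟩
    have hginj : Function.Injective g := by
      rw [hgdef]
      exact Subtype.val_injective.comp e₁.injective
    have hfinj : Function.Injective f := by
      rw [hfdef]
      exact Subtype.val_injective.comp e₂.injective
    have hgmem : ∀ i, g i ∈ sl := fun i => hgdef ▸ (e₁ i).2
    have hfmem : ∀ i, f i ∈ srᶜ := fun i => hfdef ▸ (e₂ i).2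
    obtain ⟨C, hCdef⟩ : ∃ C : (Fin (n - r) ⊕ Fin r) → ℂ,
        C = fun x => if h : x ∈ s then c ⟨x, h⟩ else 0 := ⟨_, rfl⟩
    have hCzero : ∀ x, x ∉ s → C x = 0 := by
      intro x hx
      rw [hCdef]
      exact dif_neg hx
    have hCval : ∀ x (h : x ∈ s), C x = c ⟨x, h⟩ := by
      intro x h
      rw [hCdef]
      exact dif_pos h
    have hCl : ∀ a, a ∉ sl → C (Sum.inl a) = 0 := by
      intro a ha
      exact hCzero _ (fun h => ha ((hmemsl a).2 h))
    have key : ∀ p : Fin r, (∑ a, C (Sum.inl a) * B₁ p a) + C (Sum.inr p) = 0 := by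
      intro p
      have hcp := congrFun hc (Sum.inr p)
      rw [Finset.sum_apply] at hcp
      have e0 : ∀ j : s, (c j • B.transpose (j : Fin (n - r) ⊕ Fin r)) (Sum.inr p)
          = C (j : Fin (n - r) ⊕ Fin r) * B (Sum.inr p) (j : Fin (n - r) ⊕ Fin r) := by
        rintro ⟨j, hj⟩
        rw [hCval j hj]
        simp [Matrix.transpose_apply]
      rw [Finset.sum_congr rfl (fun j _ => e0 j)] at hcp
      rw [Finset.sum_coe_sort s (f := fun y => C y * B (Sum.inr p) y)] at hcp
      have hext : ∑ y ∈ s, C y * B (Sum.inr p) y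
          = ∑ y, C y * B (Sum.inr p) y :=
        Finset.sum_subset (Finset.subset_univ s)
          (fun x _ hx => by rw [hCzero x hx, zero_mul])
      rw [hext, Fintype.sum_sum_type] at hcp
      simp only [hB1, hB2, mul_ite, mul_one, mul_zero] at hcp
      rw [Finset.sum_ite_eq Finset.univ p (fun q => C (Sum.inr q))] at hcp
      simpa using hcp
    have hCr0 : ∀ i : Fin k, C (Sum.inr (f i)) = 0 := by
      intro i
      have hfm := hfmem i
      rw [Finset.mem_compl] at hfm
      exact hCzero _ (fun h => hfm ((hmemsr _).2 h))
    have hM := H k f g hfinj hginj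
    have hMinj : Function.Injective (B₁.submatrix f g).mulVec := by
      rw [Matrix.mulVec_injective_iff_isUnit, Matrix.isUnit_iff_isUnit_det,
        isUnit_iff_ne_zero]
      exact hM
    have hx0 : (fun j : Fin k => C (Sum.inl (g j))) = 0 := by
      apply hMinj
      rw [Matrix.mulVec_zero]
      funext i
      have hkey := key (f i)
      rw [hCr0 i, add_zero] at hkey
      have esum : ∑ a, C (Sum.inl a) * B₁ (f i) a
          = ∑ j : Fin k, C (Sum.inl (g j)) * B₁ (f i) (g j) := by
        have e1 : ∑ a, C (Sum.inl a) * B₁ (f i) a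
            = ∑ a ∈ sl, C (Sum.inl a) * B₁ (f i) a :=
          (Finset.sum_subset (Finset.subset_univ sl)
            (fun a _ ha => by rw [hCl a ha, zero_mul])).symm
        have e2 : ∑ a ∈ sl, C (Sum.inl a) * B₁ (f i) a
            = ∑ a : sl, C (Sum.inl (a : Fin (n - r))) * B₁ (f i) (a : Fin (n - r)) :=
          (Finset.sum_coe_sort sl _).symm
        have e3 : ∑ a : sl, C (Sum.inl (a : Fin (n - r))) * B₁ (f i) (a : Fin (n - r))
            = ∑ j : Fin k, C (Sum.inl (g j)) * B₁ (f i) (g j) := by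
          rw [← Equiv.sum_comp e₁
            (fun a : sl => C (Sum.inl (a : Fin (n - r))) * B₁ (f i) (a : Fin (n - r)))]
          rw [hgdef]
        rw [e1, e2, e3]
      rw [esum] at hkey
      have hmv : (B₁.submatrix f g).mulVec (fun j : Fin k => C (Sum.inl (g j))) i
          = ∑ j : Fin k, C (Sum.inl (g j)) * B₁ (f i) (g j) := by
        rw [Matrix.mulVec]
        simp only [dotProduct, Matrix.submatrix_apply]
        exact Finset.sum_congr rfl (fun j _ => mul_comm _ _)
      rw [hmv, hkey]
      rfl
    have hCinl : ∀ a, C (Sum.inl a) = 0 := by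
      intro a
      by_cases ha : a ∈ sl
      · obtain ⟨i, hi⟩ : ∃ i : Fin k, g i = a :=
          ⟨e₁.symm ⟨a, ha⟩, by rw [hgdef]; simp⟩
        rw [← hi]
        exact congrFun hx0 i
      · exact hCl a ha
    have hCinr : ∀ q, C (Sum.inr q) = 0 := by
      intro q
      have hq := key q
      rw [Finset.sum_congr rfl (fun a _ => by rw [hCinl a, zero_mul])] at hq
      simpa using hq
    rintro ⟨x, hx⟩
    have hfin : C x = 0 := by
      cases x with
      | inl a => exact hCinl a
      | inr q => exact hCinr q
    rwa [hCval x hx] at hfin
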